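/- The quartic polynomial 12x⁴ − 32x³ + 24x² − 4x − 1 has exactly one real root x with x > 1. -/

import Mathlib

theorem unique_root_delta0 :
    ∃! x : ℝ, 1 < x ∧ 12 * x ^ 4 - 32 * x ^ 3 + 24 * x ^ 2 - 4 * x - 1 = 0 := by
  set f : ℝ → ℝ := fun x => 12 * x ^ 4 - 32 * x ^ 3 + 24 * x ^ 2 - 4 * x - 1 with hf
  have hd : ∀ x : ℝ, HasDerivAt f (48 * x ^ 3 - 96 * x ^ 2 + 48 * x - 4) x := by
    intro x
    have h := ((((((hasDerivAt_pow 4 x).const_mul (12:ℝ)).sub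
      ((hasDerivAt_pow 3 x).const_mul (32:ℝ))).add
      ((hasDerivAt_pow 2 x).const_mul (24:ℝ))).sub
      ((hasDerivAt_id x).const_mul (4:ℝ))).sub_const (1:ℝ))
    convert h using 2 <;> first | rfl | ring
  have hcont : Continuous f := by
    fun_prop
  have hmono : StrictMonoOn f (Set.Ici (3/2 : ℝ)) := by
    apply strictMonoOn_of_deriv_pos (convex_Ici _) hcont.continuousOn
    intro x hx
    rw [interior_Ici] at hx
    have hx' : (3/2 : ℝ) < x := hx
    rw [(hd x).deriv]
    nlinarith [mul_nonneg (by linarith : (0:ℝ) ≤ x - 3/2) (sq_nonneg (x - 1)), sq_nonneg (x - 3/2)]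
  have hneg : ∀ y : ℝ, 1 < y → y < 3/2 → f y < 0 := by
    intro y h1 h2
    simp only [hf]
    nlinarith [mul_pos (sub_pos.2 h1) (sub_pos.2 h2), sq_nonneg (y - 1), sq_nonneg (y - 3/2),
      mul_pos (mul_pos (sub_pos.2 h1) (sub_pos.2 h1)) (sub_pos.2 h2)]
  have h15 : f (3/2) < 0 := by norm_num [hf]
  have h16 : 0 < f (8/5) := by norm_num [hf]
  have hsub := intermediate_value_Ioo (by norm_num : (3/2:ℝ) ≤ 8/5) hcont.continuousOn
  obtain ⟨c, hcmem, hcval⟩ := hsub (Set.mem_Ioo.2 ⟨h15, h16⟩)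
  obtain ⟨hc1, hc2⟩ := hcmem
  refine ⟨c, ⟨by linarith, hcval⟩, ?_⟩
  rintro y ⟨hy1, hy0⟩
  have hy0' : f y = 0 := hy0
  have hy32 : (3/2:ℝ) ≤ y := by
    by_contra h
    push_neg at h
    have := hneg y hy1 h
    rw [hy0'] at this
    exact lt_irrefl 0 this
  exact hmono.injOn hy32 (Set.mem_Ici.2 hc1.le) (hy0'.trans hcval.symm)
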